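/- Consider the Laurent polynomial W(y₁,y₂,y₃) = (y₂/y₁ + y₁/y₃ + y₂ + 1/y₃)·T^{1−t} + ((1+T^{2t})·y₂/y₁ + (1+T^{2t})/y₃ + 1/y₂ + c·y₃)·T^{1+t} over the Novikov field Λ, where 0 ≤ t < 1, for appropriate choices of coefficients. Then the point y₂ = y₃ = 1, y₁ = the square root of 1 + T^{2t} in Λ_U with leading coefficient −1, satisfies y₁ ∂W/∂y₁ = 0. -/

import Mathlib

/-- The Novikov field over `ℂ`, modeled as Hahn series with real exponents;
`T^a` is `HahnSeries.single a 1`. -/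
noncomputable abbrev Nov : Type := HahnSeries ℝ ℂ

/-- For the bulk-deformed potential of the Lagrangian torus `L(t)` in `Fl(3)` whose
logarithmic derivative in `y₁` is `(−y₂/y₁ + y₁/y₃)T^{1−t} + (−y₂/y₁)T^{1+t}`, the point
`y₂ = y₃ = 1` and `y₁` the square root of `1 + T^{2t}` in `Λ_U` with leading coefficient `−1`
satisfies `y₁ ∂W/∂y₁ = 0`. -/
theorem critical_point_y11 (t : ℝ) (ht0 : 0 ≤ t) (ht1 : t < 1)
    (y₁ y₂ y₃ : Nov) (hy₁0 : y₁ ≠ 0) (hord : y₁.order = 0) (hlead : y₁.coeff 0 = -1)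
    (hsq : y₁ ^ 2 = 1 + HahnSeries.single (2 * t) (1 : ℂ))
    (hy₂ : y₂ = 1) (hy₃ : y₃ = 1) :
    (- (y₂ / y₁) + y₁ / y₃) * HahnSeries.single (1 - t) (1 : ℂ)
      + (- (y₂ / y₁)) * HahnSeries.single (1 + t) (1 : ℂ) = 0 := by
  subst hy₂ hy₃
  have key : (HahnSeries.single (2 * t) (1 : ℂ) : Nov) * HahnSeries.single (1 - t) 1
      = HahnSeries.single (1 + t) 1 := by
    rw [HahnSeries.single_mul_single, one_mul]
    congr 1
    ring
  apply mul_left_cancel₀ hy₁0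
  rw [mul_zero]
  field_simp
  linear_combination (HahnSeries.single (1 - t) (1 : ℂ) : Nov) * hsq + key
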